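/- Let π be a partition of {1,…,k} with q = #π blocks and let G be a π-consistent graph with exactly k−q+1 connected components, with edge decomposition E^{(1)},…,E^{(q)} as in the definition of consistency. Then for every s∈{1,…,q}, the edges of E^{(s)} belong to pairwise distinct connected components of G. -/

import Mathlib

open Finset

section Defs

open scoped Classical

variable {k : ℕ}

/-- Two elements lie in the same block of the partition. -/
def InSameBlock (P : Finpartition (Finset.univ : Finset (Fin k))) (x y : Fin k) : Prop :=
  ∃ B ∈ P.parts, x ∈ B ∧ y ∈ B

/-- A partition of `{1,…,k}` is crossing if there are `a < b < c < d` with `a ∼ c`, `b ∼ d`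
but `a` and `c` not in the same block as `b` and `d`. -/
def IsCrossing (P : Finpartition (Finset.univ : Finset (Fin k))) : Prop :=
  ∃ a b c d : Fin k, a < b ∧ b < c ∧ c < d ∧
    InSameBlock P a c ∧ InSameBlock P b d ∧ ¬ InSameBlock P a b

/-- The closed block `B̄ = B ∪ {l : l - 1 ∈ B}` (indices cyclic). -/
def closedBlock [NeZero k] (B : Finset (Fin k)) : Finset (Fin k) :=
  B ∪ B.image (· + 1)

/-- The multiplicity `m_π(l)`: `2` if `l ∼_π l-1`, and `1` otherwise. -/
noncomputable def multPi [NeZero k] (P : Finpartition (Finset.univ : Finset (Fin k)))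
    (l : Fin k) : ℕ :=
  if InSameBlock P l (l - 1) then 2 else 1

/-- Number of endpoints of the edge `e` equal to `v`, counted with multiplicity
(a loop at `v` counts twice). -/
def endCount (v : Fin k) (e : Sym2 (Fin k)) : ℕ :=
  Sym2.lift ⟨fun a b => (if a = v then 1 else 0) + (if b = v then 1 else 0),
    fun _ _ => add_comm _ _⟩ e

/-- Degree of the vertex `v` in the multiset of edges `M`. -/
def degIn (v : Fin k) (M : Multiset (Sym2 (Fin k))) : ℕ :=
  (M.map (endCount v)).sum

/-- The simple graph underlying the multigraph with edge multiset `M`. -/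
def graphOf (M : Multiset (Sym2 (Fin k))) : SimpleGraph (Fin k) where
  Adj v w := v ≠ w ∧ s(v, w) ∈ M
  symm := ⟨by
    intro v w h
    exact ⟨Ne.symm h.1, by rw [Sym2.eq_swap]; exact h.2⟩⟩
  loopless := ⟨fun v h => h.1 rfl⟩

/-- Number of connected components of the multigraph with edge multiset `M`
(isolated vertices and vertices carrying only loops count as components). -/
noncomputable def numComponents (M : Multiset (Sym2 (Fin k))) : ℕ :=
  Nat.card (graphOf M).ConnectedComponent

/-- `M` together with the decomposition `F` is a `π`-consistent multigraph:
`M` has `k` edges; `M` is the disjoint union of the `F B`, `B` a block of `π`;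
the ends of every edge of `F B` lie in the closed block `B̄`; and in the submultigraph
`(B̄, F B)` every vertex `l ∈ B̄` has degree `m_π(l)`. -/
def IsConsistentDecomp [NeZero k] (P : Finpartition (Finset.univ : Finset (Fin k)))
    (M : Multiset (Sym2 (Fin k))) (F : Finset (Fin k) → Multiset (Sym2 (Fin k))) : Prop :=
  Multiset.card M = k ∧
  M = ∑ B ∈ P.parts, F B ∧
  (∀ B ∈ P.parts, ∀ e ∈ F B, ∀ v ∈ e, v ∈ closedBlock B) ∧
  (∀ B ∈ P.parts, ∀ v ∈ closedBlock B, degIn v (F B) = multPi P v)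

/-- A `π`-consistent multigraph. -/
def Consistent [NeZero k] (P : Finpartition (Finset.univ : Finset (Fin k)))
    (M : Multiset (Sym2 (Fin k))) : Prop :=
  ∃ F, IsConsistentDecomp P M F

end Defs


/-! ### Auxiliary lemmas -/

section TreeBound

variable {V : Type*} [Finite V] {G : SimpleGraph V}

omit [Finite V] in
/-- A vertex other than the root of a connected graph has a neighbor strictly
closer to the root. -/
lemma exists_parent_aux (hG : G.Connected) (r : V) {v : V} (hv : v ≠ r) :
    ∃ u, G.Adj v u ∧ G.dist u r + 1 = G.dist v r := by
  obtain ⟨p, hp⟩ := (hG v r).exists_walk_length_eq_dist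
  cases p with
  | nil => exact absurd rfl hv
  | cons h q =>
    rename_i u
    refine ⟨u, h, le_antisymm ?_ ?_⟩
    · have h1 : G.dist u r ≤ q.length := SimpleGraph.dist_le q
      simp only [SimpleGraph.Walk.length_cons] at hp
      omega
    · have := SimpleGraph.dist_le (SimpleGraph.Walk.cons h
        ((hG u r).exists_walk_length_eq_dist.choose))
      have h2 := (hG u r).exists_walk_length_eq_dist.choose_spec
      simp only [SimpleGraph.Walk.length_cons] at this
      omega

/-- Injective edge-labelling bound: a connected graph on `n` vertices needs at
least `n - 1` labels. -/
lemma connected_card_le_aux {α : Type*} (hG : G.Connected) (S : Finset α) (pair : V → V → α)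
    (hmem : ∀ x y, G.Adj x y → pair x y ∈ S)
    (hinj : ∀ x y x' y', G.Adj x y → G.Adj x' y' → pair x y = pair x' y' →
      (x = x' ∧ y = y') ∨ (x = y' ∧ y = x')) :
    Nat.card V ≤ S.card + 1 := by
  classical
  have : Nonempty V := hG.nonempty
  obtain ⟨r⟩ := this
  have key : ∀ v : V, v ≠ r → ∃ u, G.Adj v u ∧ G.dist u r + 1 = G.dist v r :=
    fun v hv => exists_parent_aux hG r hv
  choose f hf hd using key
  have hinj' : Function.Injective
      (fun v : {v : V // v ≠ r} => (⟨pair v.1 (f v.1 v.2), hmem _ _ (hf v.1 v.2)⟩ :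
        {a // a ∈ S})) := by
    rintro ⟨v, hv⟩ ⟨w, hw⟩ h
    simp only [Subtype.mk.injEq] at h ⊢
    rcases hinj _ _ _ _ (hf v hv) (hf w hw) h with ⟨h1, _⟩ | ⟨h1, h2⟩
    · exact h1
    · exfalso
      have d1 := hd v hv
      have d2 := hd w hw
      rw [← h1] at d2
      rw [h2] at d1
      omega
  have hcard := Nat.card_le_card_of_injective _ hinj'
  have e1 : Nat.card {a // a ∈ S} = S.card := by
    simp [Nat.card_eq_fintype_card]
  have e2 : Nat.card {v : V // v ≠ r} = Nat.card V - 1 := by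
    have : Fintype V := Fintype.ofFinite V
    simp only [Nat.card_eq_fintype_card]
    rw [Fintype.card_subtype_compl (p := fun v => v = r)]
    simp
  have : 1 ≤ Nat.card V := Nat.one_le_iff_ne_zero.2 (Nat.card_ne_zero.2 ⟨⟨r⟩, ‹Finite V›⟩)
  omega

end TreeBound

lemma card_finset_sum_aux {ι α : Type*} (s : Finset ι) (f : ι → Multiset α) :
    Multiset.card (∑ i ∈ s, f i) = ∑ i ∈ s, Multiset.card (f i) := by
  classical
  induction s using Finset.induction with
  | empty => simp
  | insert a s h ih => simp [Finset.sum_insert h, ih]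

section AuxK

variable {k : ℕ}

lemma endCount_eq_zero_of_not_mem {v : Fin k} {e : Sym2 (Fin k)} (h : v ∉ e) :
    endCount v e = 0 := by
  induction e using Sym2.ind with
  | _ a b =>
    simp only [Sym2.mem_iff, not_or] at h
    have h1 : a ≠ v := fun hh => h.1 hh.symm
    have h2 : b ≠ v := fun hh => h.2 hh.symm
    simp [endCount, h1, h2]

lemma exists_mem_of_degIn_pos {v : Fin k} {s : Multiset (Sym2 (Fin k))}
    (h : degIn v s ≠ 0) : ∃ e ∈ s, v ∈ e := by
  by_contra hc
  push_neg at hc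
  apply h
  unfold degIn
  apply Multiset.sum_eq_zero
  intro x hx
  obtain ⟨e, he, rfl⟩ := Multiset.mem_map.1 hx
  exact endCount_eq_zero_of_not_mem (hc e he)

lemma comp_eq_of_mem_edge {M : Multiset (Sym2 (Fin k))} {e : Sym2 (Fin k)} (he : e ∈ M)
    {v w : Fin k} (hv : v ∈ e) (hw : w ∈ e) :
    (graphOf M).connectedComponentMk v = (graphOf M).connectedComponentMk w := by
  induction e using Sym2.ind with
  | _ a b =>
    by_cases hvw : v = w
    · rw [hvw]
    · have hadj : (graphOf M).Adj v w := by
        refine ⟨hvw, ?_⟩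
        rw [Sym2.mem_iff] at hv hw
        rcases hv with rfl | rfl <;> rcases hw with rfl | rfl
        · exact absurd rfl hvw
        · exact he
        · rw [Sym2.eq_swap]; exact he
        · exact absurd rfl hvw
      exact SimpleGraph.ConnectedComponent.sound hadj.reachable

end AuxK

open Fin.NatCast Fin.CommRing

/-- **Remark (edges of one block lie in distinct components).**
If `G` is a `π`-consistent multigraph with the maximal number `k - #π + 1` of connected
components, with edge decomposition `F` as in the definition of consistency, then for every
block `B` of `π` the edges of `F B` belong to pairwise distinct connected components of `G`:
no edge occurs twice in `F B`, and the endpoints of two distinct edges of `F B` are never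
joined by a path in `G`. -/
theorem edges_of_block_in_distinct_components (k : ℕ) [NeZero k]
    (P : Finpartition (Finset.univ : Finset (Fin k)))
    (M : Multiset (Sym2 (Fin k))) (F : Finset (Fin k) → Multiset (Sym2 (Fin k)))
    (hF : IsConsistentDecomp P M F)
    (hmax : numComponents M = k - P.parts.card + 1) :
    ∀ B ∈ P.parts,
      (∀ e ∈ F B, (F B).count e ≤ 1) ∧
      (∀ e ∈ F B, ∀ e' ∈ F B, e ≠ e' →
        ∀ v ∈ e, ∀ w ∈ e', ¬ (graphOf M).Reachable v w) := by
  classical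
  obtain ⟨hcard, hsum, hends, hdeg⟩ := hF
  set G := graphOf M with hGdef
  let ec : Sym2 (Fin k) → G.ConnectedComponent := fun e => G.connectedComponentMk e.out.1
  have hMF : ∀ B ∈ P.parts, ∀ e ∈ F B, e ∈ M := by
    intro B hB e he
    rw [hsum]
    exact Multiset.mem_sum.2 ⟨B, hB, he⟩
  have hec : ∀ B ∈ P.parts, ∀ e ∈ F B, ∀ v ∈ e, ec e = G.connectedComponentMk v := by
    intro B hB e he v hv
    exact comp_eq_of_mem_edge (hMF B hB e he) (Sym2.out_fst_mem e) hv
  set N : Multiset (G.ConnectedComponent × Finset (Fin k)) :=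
    ∑ B ∈ P.parts, (F B).map (fun e => (ec e, B)) with hNdef
  have hNcard : Multiset.card N = k := by
    have h1 : Multiset.card N = ∑ B ∈ P.parts, Multiset.card ((F B).map (fun e => (ec e, B))) :=
      card_finset_sum_aux _ _
    simp only [Multiset.card_map] at h1
    rw [h1, ← card_finset_sum_aux, ← hsum, hcard]
  have hNmem : ∀ B, B ∈ P.parts → ∀ v ∈ closedBlock B,
      (G.connectedComponentMk v, B) ∈ N := by
    intro B hB v hv
    have hpos : degIn v (F B) ≠ 0 := by
      rw [hdeg B hB v hv]; unfold multPi; split <;> omega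
    obtain ⟨e, he, hve⟩ := exists_mem_of_degIn_pos hpos
    exact Multiset.mem_sum.2 ⟨B, hB, Multiset.mem_map.2 ⟨e, he, by rw [hec B hB e he v hve]⟩⟩
  let W := G.ConnectedComponent ⊕ {B : Finset (Fin k) // B ∈ P.parts}
  let H : SimpleGraph W :=
    { Adj := fun x y => ∃ C Bp, (C, Bp.1) ∈ N ∧
        ((x = Sum.inl C ∧ y = Sum.inr Bp) ∨ (x = Sum.inr Bp ∧ y = Sum.inl C))
      symm := ⟨by
        rintro x y ⟨C, Bp, hm, h | h⟩
        · exact ⟨C, Bp, hm, Or.inr ⟨h.2, h.1⟩⟩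
        · exact ⟨C, Bp, hm, Or.inl ⟨h.2, h.1⟩⟩⟩
      loopless := ⟨by
        rintro x ⟨C, Bp, hm, ⟨h1, h2⟩ | ⟨h1, h2⟩⟩ <;> rw [h1] at h2 <;> exact nomatch h2⟩ }
  have hAdj : ∀ (v : Fin k) (B : Finset (Fin k)) (hB : B ∈ P.parts), v ∈ closedBlock B →
      H.Adj (Sum.inl (G.connectedComponentMk v)) (Sum.inr ⟨B, hB⟩) := by
    intro v B hB hv
    exact ⟨_, ⟨B, hB⟩, hNmem B hB v hv, Or.inl ⟨rfl, rfl⟩⟩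
  let bl : Fin k → {B : Finset (Fin k) // B ∈ P.parts} :=
    fun v => ⟨P.part v, P.part_mem.2 (Finset.mem_univ v)⟩
  have hcb1 : ∀ v : Fin k, v ∈ closedBlock (P.part v) := fun v =>
    Finset.mem_union_left _ (P.mem_part (Finset.mem_univ v))
  have hcb2 : ∀ v : Fin k, (v + 1) ∈ closedBlock (P.part v) := fun v =>
    Finset.mem_union_right _ (Finset.mem_image.2 ⟨v, P.mem_part (Finset.mem_univ v), rfl⟩)
  have hstep : ∀ v : Fin k, H.Reachable (Sum.inr (bl v)) (Sum.inr (bl (v + 1))) := fun v =>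
    ((hAdj (v + 1) (P.part v) (P.part_mem.2 (Finset.mem_univ v)) (hcb2 v)).reachable.symm).trans
      (hAdj (v + 1) (P.part (v + 1)) (P.part_mem.2 (Finset.mem_univ (v + 1)))
        (hcb1 (v + 1))).reachable
  have hiter : ∀ (n : ℕ) (v : Fin k),
      H.Reachable (Sum.inr (bl v)) (Sum.inr (bl (v + (n : Fin k)))) := by
    intro n
    induction n with
    | zero =>
      intro v
      have h0 : v + ((0 : ℕ) : Fin k) = v := by push_cast; ring
      rw [h0]
    | succ n ih =>
      intro v
      have hcast : v + ((n + 1 : ℕ) : Fin k) = (v + (n : ℕ)) + 1 := by push_cast; ring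
      rw [hcast]
      exact (ih v).trans (hstep (v + (n : ℕ)))
  have hblocks : ∀ x y : Fin k, H.Reachable (Sum.inr (bl x)) (Sum.inr (bl y)) := by
    intro x y
    have h1 := hiter ((y - x : Fin k)).val x
    rw [Fin.cast_val_eq_self] at h1
    have h2 : x + (y - x) = y := by ring
    rwa [h2] at h1
  have hWne : Nonempty W := ⟨Sum.inl (G.connectedComponentMk 0)⟩
  have toblock : ∀ x : W, ∃ v : Fin k, H.Reachable x (Sum.inr (bl v)) := by
    intro x
    rcases x with C | Bp
    · obtain ⟨v, hv⟩ := C.exists_rep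
      exact ⟨v, by rw [← hv]; exact (hAdj v (P.part v) (P.part_mem.2 (Finset.mem_univ v))
        (hcb1 v)).reachable⟩
    · obtain ⟨v, hv⟩ := P.nonempty_of_mem_parts Bp.2
      refine ⟨v, ?_⟩
      have hbv : bl v = Bp := Subtype.ext (P.part_eq_of_mem Bp.2 hv)
      rw [hbv]
  have hconn : H.Connected := by
    refine ⟨fun x y => ?_⟩
    obtain ⟨vx, hx⟩ := toblock x
    obtain ⟨vy, hy⟩ := toblock y
    exact hx.trans ((hblocks vx vy).trans hy.symm)
  let junk : G.ConnectedComponent := G.connectedComponentMk 0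
  let pr : W → W → G.ConnectedComponent × Finset (Fin k) := fun x y =>
    match x, y with
    | Sum.inl C, Sum.inr Bp => (C, Bp.1)
    | Sum.inr Bp, Sum.inl C => (C, Bp.1)
    | Sum.inl C, Sum.inl _ => (C, ∅)
    | Sum.inr Bp, Sum.inr _ => (junk, Bp.1)
  have hbound : Nat.card W ≤ N.toFinset.card + 1 := by
    apply connected_card_le_aux hconn N.toFinset pr
    · rintro x y ⟨C, Bp, hm, ⟨rfl, rfl⟩ | ⟨rfl, rfl⟩⟩ <;>
        simpa [pr] using Multiset.mem_toFinset.2 hm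
    · rintro x y x' y' ⟨C, Bp, hm, ⟨rfl, rfl⟩ | ⟨rfl, rfl⟩⟩
        ⟨C', Bp', hm', ⟨rfl, rfl⟩ | ⟨rfl, rfl⟩⟩ h <;>
        simp only [pr, Prod.mk.injEq] at h <;>
        obtain ⟨hC, hBeq⟩ := h <;>
        have hBp : Bp = Bp' := Subtype.ext hBeq <;>
        subst hC <;> subst hBp
      · exact Or.inl ⟨rfl, rfl⟩
      · exact Or.inr ⟨rfl, rfl⟩
      · exact Or.inr ⟨rfl, rfl⟩
      · exact Or.inl ⟨rfl, rfl⟩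
  have hW : Nat.card W = numComponents M + P.parts.card := by
    have h1 : Nat.card W = Nat.card G.ConnectedComponent +
        Nat.card {B : Finset (Fin k) // B ∈ P.parts} := Nat.card_sum
    rw [h1]
    congr 1
    simp [Nat.card_eq_fintype_card]
  have hq1 : 1 ≤ P.parts.card := by
    have hne : (Finset.univ : Finset (Fin k)).Nonempty := ⟨0, Finset.mem_univ 0⟩
    exact Finset.card_pos.2 (P.parts_nonempty hne.ne_empty)
  have hqk : P.parts.card ≤ k := by
    have h1 : ∑ B ∈ P.parts, B.card = k := by
      rw [P.sum_card_parts]; simp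
    calc P.parts.card = ∑ _B ∈ P.parts, 1 := by simp
      _ ≤ ∑ B ∈ P.parts, B.card :=
        Finset.sum_le_sum fun B hB => (P.nonempty_of_mem_parts hB).card_pos
      _ = k := h1
  have hle : N.toFinset.card ≤ k := by
    have h := Multiset.toFinset_card_le N
    rwa [hNcard] at h
  have hnodup : N.Nodup := by
    rw [← Multiset.toFinset_card_eq_card_iff_nodup, hNcard]
    omega
  have hcount : ∀ p, N.count p ≤ 1 := Multiset.nodup_iff_count_le_one.1 hnodup
  intro B hB
  have hFle : (F B).map (fun e => (ec e, B)) ≤ N :=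
    Finset.single_le_sum (f := fun B' => (F B').map (fun e => (ec e, B')))
      (fun i _ => Multiset.zero_le _) hB
  have hcnt1 : ∀ p, Multiset.count p ((F B).map (fun e => (ec e, B))) ≤ 1 := fun p =>
    le_trans (Multiset.count_le_of_le p hFle) (hcount p)
  constructor
  · intro e he
    by_contra hc
    have h1 : 1 ≤ (F B).count e := Multiset.one_le_count_iff_mem.2 he
    have h2 : 2 ≤ (F B).count e := by omega
    have hrep2 : Multiset.replicate 2 e ≤ F B := Multiset.le_count_iff_replicate_le.1 h2
    have h3 := Multiset.count_le_of_le (ec e, B) (Multiset.map_le_map (f := fun x => (ec x, B)) hrep2)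
    rw [Multiset.map_replicate, Multiset.count_replicate] at h3
    simp only [if_pos rfl] at h3
    norm_num at h3
    have := hcnt1 (ec e, B)
    omega
  · intro e he e' he' hne v hv w hw hreach
    have hEq : ec e = ec e' := by
      rw [hec B hB e he v hv, hec B hB e' he' w hw]
      exact SimpleGraph.ConnectedComponent.sound hreach
    have h1 : e' ∈ (F B).erase e := (Multiset.mem_erase_of_ne (Ne.symm hne)).2 he'
    have h2 : e ::ₘ e' ::ₘ ((F B).erase e).erase e' = F B := by
      rw [Multiset.cons_erase h1, Multiset.cons_erase he]
    have hcnt2 : 2 ≤ Multiset.count (ec e, B) ((F B).map (fun x => (ec x, B))) := by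
      rw [← h2, Multiset.map_cons, Multiset.map_cons]
      have he2 : ((ec e', B) : G.ConnectedComponent × Finset (Fin k)) = (ec e, B) := by
        rw [hEq]
      rw [he2, Multiset.count_cons_self, Multiset.count_cons_self]
      omega
    have := hcnt1 (ec e, B)
    omega
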